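/- (Discrete gradient estimate) There exists a constant C > 0 such that for every positive integer N, every function u discrete harmonic on Q_N, and every pair of adjacent lattice points q, q' ∈ Q_{⌊N/3⌋} (i.e. |q − q'| = 1 in ℤ²), one has |u(q) − u(q')| ≤ C·N^{−1}·max_{Q_N} |u|. -/

import Mathlib

set_option maxHeartbeats 1000000

/-- The square `Q_N = {(n,m) : |n| ≤ N, |m| ≤ N}` as a finite set. -/
noncomputable def Q (N : ℕ) : Finset (ℤ × ℤ) := Finset.Icc (-(N : ℤ)) N ×ˢ Finset.Icc (-(N : ℤ)) N

/-- `u` is discrete harmonic on `Q_N`: the mean value property holds at all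
interior points `(n,m)` with `|n| ≤ N-1`, `|m| ≤ N-1`. -/
def DiscreteHarmonicOn (N : ℕ) (u : ℤ × ℤ → ℝ) : Prop :=
  ∀ n m : ℤ, |n| ≤ (N : ℤ) - 1 → |m| ≤ (N : ℤ) - 1 →
    4 * u (n, m) = u (n + 1, m) + u (n - 1, m) + u (n, m + 1) + u (n, m - 1)

/-- Pointwise cross-term estimate (one neighbor). -/
lemma dge_per (R e d Vi V : ℝ) (hR : 1 ≤ R) (he : 0 ≤ e) (hd : d^2 ≤ 9*R^2) :
    -(9*R^2+6*R*e)*(Vi-V)^2 - (1/8)*(3*R+2*e)^2*(Vi-V)^2 - 72*R^2*V^2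
      ≤ (d^2-2*d*e)*(Vi^2-V^2) := by
  have hR0 : (0:ℝ) ≤ R := by linarith
  have hd1 : d ≤ 3*R := by nlinarith [sq_nonneg (d - 3*R)]
  have hd2 : -(3*R) ≤ d := by nlinarith [sq_nonneg (d + 3*R)]
  have h2 : (d-2*e)^2 ≤ (3*R+2*e)^2 := by
    nlinarith [mul_nonneg (by linarith : (0:ℝ) ≤ 3*R+d) (by linarith : (0:ℝ) ≤ 3*R-d+4*e)]
  have hb2 : (d^2-2*d*e)^2 ≤ 9*R^2*(3*R+2*e)^2 := by
    have h3 : (d^2-2*d*e)^2 = d^2*(d-2*e)^2 := by ring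
    rw [h3]
    exact mul_le_mul hd h2 (sq_nonneg _) (by positivity)
  have ha : (1/8)*(3*R+2*e)^2 ≤ d^2-2*d*e + (9*R^2+6*R*e) + (1/8)*(3*R+2*e)^2 := by
    nlinarith [mul_nonneg he (by linarith : (0:ℝ) ≤ 3*R-d), sq_nonneg d]
  have hapos : 0 < d^2-2*d*e + (9*R^2+6*R*e) + (1/8)*(3*R+2*e)^2 := by
    nlinarith [ha, sq_nonneg (3*R+2*e)]
  have hac : (d^2-2*d*e)^2 ≤ (d^2-2*d*e + (9*R^2+6*R*e) + (1/8)*(3*R+2*e)^2) * (72*R^2) := by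
    have step := mul_le_mul_of_nonneg_right ha (by positivity : (0:ℝ) ≤ 72*R^2)
    nlinarith [hb2, step]
  set a := d^2-2*d*e + (9*R^2+6*R*e) + (1/8)*(3*R+2*e)^2 with hadef
  have hquad : 0 ≤ a*(Vi-V)^2 + 2*(d^2-2*d*e)*(Vi-V)*V + 72*R^2*V^2 := by
    have key : 0 ≤ (a*(Vi-V) + (d^2-2*d*e)*V)^2 := sq_nonneg _
    have key2 : 0 ≤ (a*(72*R^2) - (d^2-2*d*e)^2) * V^2 :=
      mul_nonneg (by linarith) (sq_nonneg V)
    have hid : a * (a*(Vi-V)^2 + 2*(d^2-2*d*e)*(Vi-V)*V + 72*R^2*V^2)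
        = (a*(Vi-V) + (d^2-2*d*e)*V)^2 + (a*(72*R^2) - (d^2-2*d*e)^2) * V^2 := by ring
    have h0 : a * 0 ≤ a * (a*(Vi-V)^2 + 2*(d^2-2*d*e)*(Vi-V)*V + 72*R^2*V^2) := by
      rw [mul_zero, hid]; linarith only [key, key2]
    exact le_of_mul_le_mul_left h0 hapos
  rw [hadef] at hquad
  linarith only [hquad]

/-- Abstract assembly step. -/
lemma dge_assemble (R e0 E W V S CR : ℝ) (hR : 1 ≤ R) (he0 : 0 ≤ e0) (he0' : e0 ≤ R^2)
    (hE : 0 ≤ E) (hW : V^2 ≤ W) (hS : 0 ≤ S)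
    (hcr : -(9*R^2+6*R*e0)*E - (1/8)*(3*R+2*e0)^2*E - 288*R^2*V^2 ≤ CR) :
    0 ≤ e0^2*E + S - 8*(e0*V^2) + CR + 300*R^2*W + 46*R^2*E := by
  have hA : 0 ≤ ((1/2)*e0^2 - (15/2)*R*e0 + (287/8)*R^2) * E := by
    apply mul_nonneg _ hE
    nlinarith [sq_nonneg (2*e0 - 15*R), sq_nonneg R]
  have hB : 0 ≤ (12*R^2 - 8*e0)*V^2 := by
    apply mul_nonneg _ (sq_nonneg V)
    nlinarith
  have hWs : 300*R^2*V^2 ≤ 300*R^2*W := by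
    have := mul_le_mul_of_nonneg_left hW (by positivity : (0:ℝ) ≤ 300*R^2)
    linarith
  linarith only [hA, hB, hWs, hcr, hS]

/-- Core interior inequality for the discrete Bernstein argument. -/
lemma dge_core (R e0 d1 d2 d3 d4 V V1 V2 V3 V4 U U1 U2 U3 U4 : ℝ)
    (hR : 1 ≤ R) (he0 : 0 ≤ e0) (he0' : e0 ≤ R^2)
    (hd1 : d1^2 ≤ 9*R^2) (hd2 : d2^2 ≤ 9*R^2) (hd3 : d3^2 ≤ 9*R^2) (hd4 : d4^2 ≤ 9*R^2)
    (hsum : d1+d2+d3+d4 = 4)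
    (hV : V1+V2+V3+V4 = 4*V)
    (hU : U1+U2+U3+U4 = 4*U)
    (hW : V^2 ≤ (U1-U)^2+(U2-U)^2+(U3-U)^2+(U4-U)^2) :
    0 ≤ ((e0-d1)^2*V1^2 + (e0-d2)^2*V2^2 + (e0-d3)^2*V3^2 + (e0-d4)^2*V4^2)
      + 300*R^2*(U1^2+U2^2+U3^2+U4^2) + 46*R^2*(V1^2+V2^2+V3^2+V4^2)
      - 4*(e0^2*V^2) - 1200*R^2*U^2 - 184*R^2*V^2 := by
  have p1 := dge_per R e0 d1 V1 V hR he0 hd1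
  have p2 := dge_per R e0 d2 V2 V hR he0 hd2
  have p3 := dge_per R e0 d3 V3 V hR he0 hd3
  have p4 := dge_per R e0 d4 V4 V hR he0 hd4
  have hcr : -(9*R^2+6*R*e0)*((V1-V)^2+(V2-V)^2+(V3-V)^2+(V4-V)^2)
      - (1/8)*(3*R+2*e0)^2*((V1-V)^2+(V2-V)^2+(V3-V)^2+(V4-V)^2) - 288*R^2*V^2
      ≤ (d1^2-2*d1*e0)*(V1^2-V^2) + (d2^2-2*d2*e0)*(V2^2-V^2)
        + (d3^2-2*d3*e0)*(V3^2-V^2) + (d4^2-2*d4*e0)*(V4^2-V^2) := by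
    linarith only [p1, p2, p3, p4]
  have glue : ((e0-d1)^2*V1^2 + (e0-d2)^2*V2^2 + (e0-d3)^2*V3^2 + (e0-d4)^2*V4^2)
      + 300*R^2*(U1^2+U2^2+U3^2+U4^2) + 46*R^2*(V1^2+V2^2+V3^2+V4^2)
      - 4*(e0^2*V^2) - 1200*R^2*U^2 - 184*R^2*V^2
      = e0^2*((V1-V)^2+(V2-V)^2+(V3-V)^2+(V4-V)^2)
        + V^2*(d1^2+d2^2+d3^2+d4^2) - 8*(e0*V^2)
        + ((d1^2-2*d1*e0)*(V1^2-V^2) + (d2^2-2*d2*e0)*(V2^2-V^2)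
          + (d3^2-2*d3*e0)*(V3^2-V^2) + (d4^2-2*d4*e0)*(V4^2-V^2))
        + 300*R^2*((U1-U)^2+(U2-U)^2+(U3-U)^2+(U4-U)^2)
        + 46*R^2*((V1-V)^2+(V2-V)^2+(V3-V)^2+(V4-V)^2) := by
    linear_combination (2*e0^2*V + 92*R^2*V)*hV + (600*R^2*U)*hU + (-2*e0*V^2)*hsum
  rw [glue]
  exact dge_assemble R e0 _ _ V _ _ hR he0 he0'
    (by positivity) hW (by positivity) hcr

lemma mem_Q {n : ℕ} {x : ℤ × ℤ} : x ∈ Q n ↔ |x.1| ≤ (n:ℤ) ∧ |x.2| ≤ (n:ℤ) := by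
  simp [Q, Finset.mem_product, Finset.mem_Icc, abs_le]

/-- the discrete difference in direction `(ε₁, ε₂)` -/
def vv (u : ℤ × ℤ → ℝ) (ε₁ ε₂ a b : ℤ) : ℝ := u (a + ε₁, b + ε₂) - u (a, b)

/-- the weight `K² - |x-q|²`, as a real number -/
def eta (q : ℤ × ℤ) (K : ℤ) (a b : ℤ) : ℝ := ((K^2 - ((a - q.1)^2 + (b - q.2)^2) : ℤ) : ℝ)

/-- `|x-q|²` as a real number -/
def rhoR (q : ℤ × ℤ) (a b : ℤ) : ℝ := (((a - q.1)^2 + (b - q.2)^2 : ℤ) : ℝ)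

/-- the Bernstein auxiliary function -/
def GG (u : ℤ × ℤ → ℝ) (ε₁ ε₂ : ℤ) (q : ℤ × ℤ) (K : ℤ) (M : ℝ) (a b : ℤ) : ℝ :=
  (eta q K a b)^2 * (vv u ε₁ ε₂ a b)^2 + 300*((K:ℝ))^2*(u (a, b))^2
    + 46*((K:ℝ))^2*(vv u ε₁ ε₂ a b)^2 + M^2 * rhoR q a b



lemma dge_ints (t s R : ℤ) (hR : 1 ≤ R) (hin : t^2 + s^2 ≤ R^2) :
    ((t+1)^2+s^2 ≤ (R+1)^2 ∧ (t-1)^2+s^2 ≤ (R+1)^2 ∧ t^2+(s+1)^2 ≤ (R+1)^2 ∧ t^2+(s-1)^2 ≤ (R+1)^2)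
    ∧ ((2*t+1)^2 ≤ 9*R^2 ∧ (-(2*t)+1)^2 ≤ 9*R^2 ∧ (2*s+1)^2 ≤ 9*R^2 ∧ (-(2*s)+1)^2 ≤ 9*R^2)
    ∧ (t ≤ R ∧ -R ≤ t ∧ s ≤ R ∧ -R ≤ s) := by
  have h1 : t^2 ≤ R^2 := by nlinarith [sq_nonneg s]
  have h2 : s^2 ≤ R^2 := by nlinarith [sq_nonneg t]
  have ta : t ≤ R := by nlinarith [sq_nonneg (t-R)]
  have tb : -R ≤ t := by nlinarith [sq_nonneg (t+R)]
  have sa : s ≤ R := by nlinarith [sq_nonneg (s-R)]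
  have sb : -R ≤ s := by nlinarith [sq_nonneg (s+R)]
  exact ⟨⟨by nlinarith, by nlinarith, by nlinarith, by nlinarith⟩,
    ⟨by nlinarith, by nlinarith, by nlinarith, by nlinarith⟩, ta, tb, sa, sb⟩

lemma dge_intb (R r : ℤ) (hR : 1 ≤ R) (h1 : R^2 < r) (h2 : r ≤ (R+1)^2) :
    (R^2 - r)^2 ≤ 9*R^2 ∧ r ≤ 4*R^2 := by
  constructor <;> nlinarith

lemma dge_sqabs (x c : ℝ) (h : |x| ≤ c) : x^2 ≤ c^2 := by
  have := abs_le.mp h; nlinarith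

lemma dge_W (u : ℤ × ℤ → ℝ) (ε₁ ε₂ a b : ℤ)
    (hε : ε₁ = 1 ∧ ε₂ = 0 ∨ ε₁ = -1 ∧ ε₂ = 0 ∨ ε₁ = 0 ∧ ε₂ = 1 ∨ ε₁ = 0 ∧ ε₂ = -1) :
    (vv u ε₁ ε₂ a b)^2 ≤ (u (a+1, b) - u (a, b))^2 + (u (a-1, b) - u (a, b))^2
      + (u (a, b+1) - u (a, b))^2 + (u (a, b-1) - u (a, b))^2 := by
  rcases hε with ⟨h1,h2⟩|⟨h1,h2⟩|⟨h1,h2⟩|⟨h1,h2⟩ <;> subst h1 <;> subst h2 <;>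
    simp only [vv, add_zero,
      show a + (-1:ℤ) = a - 1 from by ring, show b + (-1:ℤ) = b - 1 from by ring] <;>
    nlinarith [sq_nonneg (u (a+1, b) - u (a, b)), sq_nonneg (u (a-1, b) - u (a, b)),
      sq_nonneg (u (a, b+1) - u (a, b)), sq_nonneg (u (a, b-1) - u (a, b))]

lemma dge_main (N : ℕ) (hN4 : 4 ≤ N) (u : ℤ × ℤ → ℝ) (hu : DiscreteHarmonicOn N u)
    (q : ℤ × ℤ) (hq1 : |q.1| ≤ ((N/3 : ℕ) : ℤ)) (hq2 : |q.2| ≤ ((N/3 : ℕ) : ℤ))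
    (ε₁ ε₂ : ℤ)
    (hε : ε₁ = 1 ∧ ε₂ = 0 ∨ ε₁ = -1 ∧ ε₂ = 0 ∨ ε₁ = 0 ∧ ε₂ = 1 ∨ ε₁ = 0 ∧ ε₂ = -1)
    (M : ℝ) (hM : ∀ x ∈ Q N, |u x| ≤ M) (hMpos : 0 < M) :
    ((N/3 : ℕ) : ℝ) * |u (q.1 + ε₁, q.2 + ε₂) - u q| ≤ 23 * M := by
  set K : ℕ := N/3 with hKdef
  have hK1 : 1 ≤ K := by omega
  have h2K : 2*K + 2 ≤ N := by omega
  have hKz : (1:ℤ) ≤ (K:ℤ) := by exact_mod_cast hK1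
  have he11 : |ε₁| ≤ 1 := by rcases hε with ⟨h1,h2⟩|⟨h1,h2⟩|⟨h1,h2⟩|⟨h1,h2⟩ <;> subst h1 <;> subst h2 <;> norm_num
  have he12 : |ε₂| ≤ 1 := by rcases hε with ⟨h1,h2⟩|⟨h1,h2⟩|⟨h1,h2⟩|⟨h1,h2⟩ <;> subst h1 <;> subst h2 <;> norm_num
  have hq1' := abs_le.mp hq1
  have hq2' := abs_le.mp hq2
  -- u is bounded near the origin
  have hub : ∀ a b : ℤ, |a| ≤ 2*(K:ℤ)+2 → |b| ≤ 2*(K:ℤ)+2 → |u (a, b)| ≤ M := by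
    intro a b ha hb
    have ha' := abs_le.mp ha
    have hb' := abs_le.mp hb
    apply hM
    rw [mem_Q]
    constructor <;> apply abs_le.mpr <;> constructor <;> omega
  -- v is bounded near the origin
  have hvb : ∀ a b : ℤ, |a| ≤ 2*(K:ℤ)+1 → |b| ≤ 2*(K:ℤ)+1 → |vv u ε₁ ε₂ a b| ≤ 2*M := by
    intro a b ha hb
    have ha' := abs_le.mp ha
    have hb' := abs_le.mp hb
    have he1' := abs_le.mp he11
    have he2' := abs_le.mp he12
    have h1 := abs_le.mp (hub (a+ε₁) (b+ε₂) (abs_le.mpr (by omega)) (abs_le.mpr (by omega)))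
    have h2 := abs_le.mp (hub a b (abs_le.mpr (by omega)) (abs_le.mpr (by omega)))
    apply abs_le.mpr
    simp only [vv]
    constructor <;> linarith
  -- harmonicity of u near the origin
  have harm : ∀ a b : ℤ, |a| ≤ 2*(K:ℤ)+1 → |b| ≤ 2*(K:ℤ)+1 →
      4 * u (a, b) = u (a+1, b) + u (a-1, b) + u (a, b+1) + u (a, b-1) := by
    intro a b ha hb
    have ha' := abs_le.mp ha
    have hb' := abs_le.mp hb
    exact hu a b (abs_le.mpr (by omega)) (abs_le.mpr (by omega))
  -- harmonicity of v near the origin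
  have harmv : ∀ a b : ℤ, |a| ≤ 2*(K:ℤ) → |b| ≤ 2*(K:ℤ) →
      4 * vv u ε₁ ε₂ a b = vv u ε₁ ε₂ (a+1) b + vv u ε₁ ε₂ (a-1) b
        + vv u ε₁ ε₂ a (b+1) + vv u ε₁ ε₂ a (b-1) := by
    intro a b ha hb
    have ha' := abs_le.mp ha
    have hb' := abs_le.mp hb
    have he1' := abs_le.mp he11
    have he2' := abs_le.mp he12
    have h1 := harm a b (abs_le.mpr (by omega)) (abs_le.mpr (by omega))
    have h2 := harm (a+ε₁) (b+ε₂) (abs_le.mpr (by omega)) (abs_le.mpr (by omega))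
    simp only [vv]
    rw [show a+1+ε₁ = a+ε₁+1 by ring, show a-1+ε₁ = a+ε₁-1 by ring,
      show b+1+ε₂ = b+ε₂+1 by ring, show b-1+ε₂ = b+ε₂-1 by ring]
    linarith [h1, h2]
  -- the maximizing point
  set Sb : Finset (ℤ × ℤ) :=
    (Q (2*K+1)).filter (fun x => (x.1-q.1)^2+(x.2-q.2)^2 ≤ ((K:ℤ)+1)^2) with hSb
  have hqmem : q ∈ Sb := by
    rw [hSb, Finset.mem_filter, mem_Q]
    refine ⟨⟨?_, ?_⟩, ?_⟩
    · apply abs_le.mpr; push_cast; omega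
    · apply abs_le.mpr; push_cast; omega
    · simp; positivity
  obtain ⟨x₀, hx₀S, hx₀max⟩ :=
    Finset.exists_max_image Sb (fun x => GG u ε₁ ε₂ q (K:ℤ) M x.1 x.2) ⟨q, hqmem⟩
  rw [hSb, Finset.mem_filter, mem_Q] at hx₀S
  obtain ⟨⟨hbx1, hbx2⟩, hρbar⟩ := hx₀S
  set a : ℤ := x₀.1 with hadef
  set b : ℤ := x₀.2 with hbdef
  have hbx1' := abs_le.mp hbx1
  have hbx2' := abs_le.mp hbx2
  have hmax : ∀ y ∈ Sb, GG u ε₁ ε₂ q (K:ℤ) M y.1 y.2 ≤ GG u ε₁ ε₂ q (K:ℤ) M a b := by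
    intro y hy; exact hx₀max y hy
  -- Step 1: the max is attained outside the ball of radius K
  have hout : ((K:ℤ))^2 < (a-q.1)^2+(b-q.2)^2 := by
    by_contra hin
    push_neg at hin
    obtain ⟨⟨j1, j2, j3, j4⟩, ⟨i1, i2, i3, i4⟩, ht1a, ht1b, hs1a, hs1b⟩ :=
      dge_ints (a-q.1) (b-q.2) (K:ℤ) hKz hin
    have haa : |a| ≤ 2*(K:ℤ) := abs_le.mpr (by omega)
    have hbb : |b| ≤ 2*(K:ℤ) := abs_le.mpr (by omega)
    have haa' := abs_le.mp haa
    have hbb' := abs_le.mp hbb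
    have hnb : ∀ a' b' : ℤ, |a'| ≤ 2*(K:ℤ)+1 → |b'| ≤ 2*(K:ℤ)+1 →
        (a'-q.1)^2+(b'-q.2)^2 ≤ ((K:ℤ)+1)^2 → ((a', b') : ℤ × ℤ) ∈ Sb := by
      intro a' b' h1 h2 h3
      rw [hSb, Finset.mem_filter, mem_Q]
      have h1' := abs_le.mp h1
      have h2' := abs_le.mp h2
      exact ⟨⟨abs_le.mpr (by push_cast; omega), abs_le.mpr (by push_cast; omega)⟩, h3⟩
    have m1 : ((a+1, b) : ℤ × ℤ) ∈ Sb :=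
      hnb _ _ (abs_le.mpr (by omega)) (abs_le.mpr (by omega)) (by linear_combination j1)
    have m2 : ((a-1, b) : ℤ × ℤ) ∈ Sb :=
      hnb _ _ (abs_le.mpr (by omega)) (abs_le.mpr (by omega)) (by linear_combination j2)
    have m3 : ((a, b+1) : ℤ × ℤ) ∈ Sb :=
      hnb _ _ (abs_le.mpr (by omega)) (abs_le.mpr (by omega)) (by linear_combination j3)
    have m4 : ((a, b-1) : ℤ × ℤ) ∈ Sb :=
      hnb _ _ (abs_le.mpr (by omega)) (abs_le.mpr (by omega)) (by linear_combination j4)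
    -- harmonic identities
    have hVrel := harmv a b haa hbb
    have hUrel := harm a b (by apply abs_le.mpr; omega) (by apply abs_le.mpr; omega)
    have hWrel := dge_W u ε₁ ε₂ a b hε
    have hrnn : (0:ℤ) ≤ (a-q.1)^2+(b-q.2)^2 := by positivity
    -- instantiate the core inequality
    have core := dge_core (((K:ℤ)):ℝ) (eta q (K:ℤ) a b)
      (((2*(a-q.1)+1 : ℤ)):ℝ) (((-(2*(a-q.1))+1 : ℤ)):ℝ)
      (((2*(b-q.2)+1 : ℤ)):ℝ) (((-(2*(b-q.2))+1 : ℤ)):ℝ)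
      (vv u ε₁ ε₂ a b) (vv u ε₁ ε₂ (a+1) b) (vv u ε₁ ε₂ (a-1) b)
      (vv u ε₁ ε₂ a (b+1)) (vv u ε₁ ε₂ a (b-1))
      (u (a, b)) (u (a+1, b)) (u (a-1, b)) (u (a, b+1)) (u (a, b-1))
      (by exact_mod_cast hKz)
      (by simp only [eta]; exact_mod_cast sub_nonneg.mpr hin)
      (by simp only [eta]
          have h9 : ((K:ℤ)^2 - ((a-q.1)^2+(b-q.2)^2) : ℤ) ≤ (K:ℤ)^2 := by linarith [hrnn]
          exact_mod_cast h9)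
      (by exact_mod_cast i1) (by exact_mod_cast i2) (by exact_mod_cast i3) (by exact_mod_cast i4)
      (by push_cast; ring)
      (by linarith [hVrel])
      (by linarith [hUrel])
      hWrel
    -- cast equalities linking eta at neighbors with e0, d_i
    have c1 : (eta q (K:ℤ) (a+1) b)^2 * (vv u ε₁ ε₂ (a+1) b)^2
        = (eta q (K:ℤ) a b - (((2*(a-q.1)+1 : ℤ)):ℝ))^2 * (vv u ε₁ ε₂ (a+1) b)^2 := by
      have : eta q (K:ℤ) (a+1) b = eta q (K:ℤ) a b - (((2*(a-q.1)+1 : ℤ)):ℝ) := by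
        simp only [eta]; push_cast; ring
      rw [this]
    have c2 : (eta q (K:ℤ) (a-1) b)^2 * (vv u ε₁ ε₂ (a-1) b)^2
        = (eta q (K:ℤ) a b - (((-(2*(a-q.1))+1 : ℤ)):ℝ))^2 * (vv u ε₁ ε₂ (a-1) b)^2 := by
      have : eta q (K:ℤ) (a-1) b = eta q (K:ℤ) a b - (((-(2*(a-q.1))+1 : ℤ)):ℝ) := by
        simp only [eta]; push_cast; ring
      rw [this]
    have c3 : (eta q (K:ℤ) a (b+1))^2 * (vv u ε₁ ε₂ a (b+1))^2
        = (eta q (K:ℤ) a b - (((2*(b-q.2)+1 : ℤ)):ℝ))^2 * (vv u ε₁ ε₂ a (b+1))^2 := by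
      have : eta q (K:ℤ) a (b+1) = eta q (K:ℤ) a b - (((2*(b-q.2)+1 : ℤ)):ℝ) := by
        simp only [eta]; push_cast; ring
      rw [this]
    have c4 : (eta q (K:ℤ) a (b-1))^2 * (vv u ε₁ ε₂ a (b-1))^2
        = (eta q (K:ℤ) a b - (((-(2*(b-q.2))+1 : ℤ)):ℝ))^2 * (vv u ε₁ ε₂ a (b-1))^2 := by
      have : eta q (K:ℤ) a (b-1) = eta q (K:ℤ) a b - (((-(2*(b-q.2))+1 : ℤ)):ℝ) := by
        simp only [eta]; push_cast; ring
      rw [this]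
    -- rho sum identity (multiplied by M²)
    have crho : M^2 * rhoR q (a+1) b + M^2 * rhoR q (a-1) b + M^2 * rhoR q a (b+1)
        + M^2 * rhoR q a (b-1) = 4*(M^2 * rhoR q a b) + 4*M^2 := by
      simp only [rhoR]; push_cast; ring
    have hM2 : 0 < M^2 := by positivity
    have g1 := hmax _ m1
    have g2 := hmax _ m2
    have g3 := hmax _ m3
    have g4 := hmax _ m4
    simp only [GG] at g1 g2 g3 g4
    linarith only [core, g1, g2, g3, g4, c1, c2, c3, c4, crho, hM2]
  -- Step 2: boundary estimate
  have hRR : (1:ℝ) ≤ (((K:ℤ)):ℝ) := by exact_mod_cast hKz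
  have gq := hmax q hqmem
  have hib := dge_intb (K:ℤ) ((a-q.1)^2+(b-q.2)^2) hKz hout hρbar
  have hGab : GG u ε₁ ε₂ q (K:ℤ) M a b ≤ 524*(((K:ℤ)):ℝ)^2*M^2 := by
    have hb1 : (eta q (K:ℤ) a b)^2 ≤ 9*(((K:ℤ)):ℝ)^2 := by
      simp only [eta]; exact_mod_cast hib.1
    have hvx : (vv u ε₁ ε₂ a b)^2 ≤ (2*M)^2 :=
      dge_sqabs _ _ (hvb a b (by apply abs_le.mpr; omega) (by apply abs_le.mpr; omega))
    have hux : (u (a, b))^2 ≤ M^2 :=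
      dge_sqabs _ _ (hub a b (by apply abs_le.mpr; omega) (by apply abs_le.mpr; omega))
    have hrx : rhoR q a b ≤ 4*(((K:ℤ)):ℝ)^2 := by
      simp only [rhoR]; exact_mod_cast hib.2
    have t1 : (eta q (K:ℤ) a b)^2 * (vv u ε₁ ε₂ a b)^2 ≤ (9*(((K:ℤ)):ℝ)^2) * ((2*M)^2) :=
      mul_le_mul hb1 hvx (sq_nonneg _) (by positivity)
    have t2 := mul_le_mul_of_nonneg_left hux (by positivity : (0:ℝ) ≤ 300*(((K:ℤ)):ℝ)^2)
    have t3 := mul_le_mul_of_nonneg_left hvx (by positivity : (0:ℝ) ≤ 46*(((K:ℤ)):ℝ)^2)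
    have t4 := mul_le_mul_of_nonneg_left hrx (sq_nonneg M)
    simp only [GG]
    linarith only [t1, t2, t3, t4]
  have hetaq : eta q (K:ℤ) q.1 q.2 = (((K:ℤ)):ℝ)^2 := by simp only [eta]; push_cast; ring
  have hrhoq : rhoR q q.1 q.2 = 0 := by simp only [rhoR]; push_cast; ring
  have hGq : (((K:ℤ)):ℝ)^4 * (vv u ε₁ ε₂ q.1 q.2)^2 ≤ GG u ε₁ ε₂ q (K:ℤ) M q.1 q.2 := by
    simp only [GG, hetaq, hrhoq]
    have n1 : (0:ℝ) ≤ 300*(((K:ℤ)):ℝ)^2*(u (q.1, q.2))^2 := by positivity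
    have n2 : (0:ℝ) ≤ 46*(((K:ℤ)):ℝ)^2*(vv u ε₁ ε₂ q.1 q.2)^2 := by positivity
    linarith only [n1, n2]
  have hchain : (((K:ℤ)):ℝ)^4 * (vv u ε₁ ε₂ q.1 q.2)^2 ≤ 524*(((K:ℤ)):ℝ)^2*M^2 := by
    linarith [hGq, gq, hGab]
  have hRRpos : (0:ℝ) < (((K:ℤ)):ℝ)^2 := by positivity
  have h524 : (((K:ℤ)):ℝ)^2 * (vv u ε₁ ε₂ q.1 q.2)^2 ≤ 524*M^2 := by
    nlinarith [hchain, hRRpos, hRR, sq_nonneg (vv u ε₁ ε₂ q.1 q.2)]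
  have hvvq : vv u ε₁ ε₂ q.1 q.2 = u (q.1 + ε₁, q.2 + ε₂) - u q := by
    simp only [vv, Prod.mk.eta]
  have hcastK : ((K:ℕ):ℝ) = (((K:ℤ)):ℝ) := by push_cast; ring
  rw [hcastK]
  rw [← hvvq]
  nlinarith [h524, sq_abs (vv u ε₁ ε₂ q.1 q.2), abs_nonneg (vv u ε₁ ε₂ q.1 q.2), hMpos,
    sq_nonneg ((((K:ℤ)):ℝ)*|vv u ε₁ ε₂ q.1 q.2| - 23*M)]


/-- Discrete gradient estimate: for adjacent `q, q' ∈ Q_{⌊N/3⌋}`,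
`|u(q) - u(q')| ≤ C·N⁻¹·max_{Q_N} |u|`. -/
theorem discrete_gradient_estimate :
    ∃ C > (0 : ℝ), ∀ N : ℕ, 0 < N → ∀ u : ℤ × ℤ → ℝ, DiscreteHarmonicOn N u →
      ∀ q q' : ℤ × ℤ, q ∈ Q (N / 3) → q' ∈ Q (N / 3) →
        |q.1 - q'.1| + |q.2 - q'.2| = 1 →
      ∀ M : ℝ, (∀ x ∈ Q N, |u x| ≤ M) → |u q - u q'| ≤ C * M / N := by
  refine ⟨180, by norm_num, ?_⟩
  intro N hN u hu q q' hq hq' hadj M hM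
  have hqq := mem_Q.mp hq
  have hqq' := mem_Q.mp hq'
  have hd3 : ((N/3 : ℕ) : ℤ) ≤ (N : ℤ) := by exact_mod_cast Nat.div_le_self N 3
  have hqN : q ∈ Q N := mem_Q.mpr ⟨le_trans hqq.1 hd3, le_trans hqq.2 hd3⟩
  have hq'N : q' ∈ Q N := mem_Q.mpr ⟨le_trans hqq'.1 hd3, le_trans hqq'.2 hd3⟩
  have hMq := hM q hqN
  have hMq' := hM q' hq'N
  have hM0 : 0 ≤ M := le_trans (abs_nonneg _) hMq
  have hNpos : (0:ℝ) < (N:ℝ) := by exact_mod_cast hN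
  rw [div_eq_mul_inv, mul_comm (180*M), ← div_eq_inv_mul, le_div_iff₀ hNpos]
  rcases eq_or_lt_of_le hM0 with hM0' | hMpos
  · have h1 : u q = 0 := abs_eq_zero.mp (le_antisymm (hM0' ▸ hMq) (abs_nonneg _))
    have h2 : u q' = 0 := abs_eq_zero.mp (le_antisymm (hM0' ▸ hMq') (abs_nonneg _))
    have h3 : |u q - u q'| = 0 := by rw [h1, h2]; simp
    rw [h3]
    nlinarith [hNpos, hM0']
  · rcases Nat.lt_or_ge N 4 with hN4 | hN4
    · interval_cases N
      · exfalso
        have z1 : q.1 = 0 := abs_nonpos_iff.mp (by exact_mod_cast hqq.1)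
        have z2 : q.2 = 0 := abs_nonpos_iff.mp (by exact_mod_cast hqq.2)
        have z3 : q'.1 = 0 := abs_nonpos_iff.mp (by exact_mod_cast hqq'.1)
        have z4 : q'.2 = 0 := abs_nonpos_iff.mp (by exact_mod_cast hqq'.2)
        rw [z1, z2, z3, z4] at hadj
        simp at hadj
      · exfalso
        have z1 : q.1 = 0 := abs_nonpos_iff.mp (by exact_mod_cast hqq.1)
        have z2 : q.2 = 0 := abs_nonpos_iff.mp (by exact_mod_cast hqq.2)
        have z3 : q'.1 = 0 := abs_nonpos_iff.mp (by exact_mod_cast hqq'.1)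
        have z4 : q'.2 = 0 := abs_nonpos_iff.mp (by exact_mod_cast hqq'.2)
        rw [z1, z2, z3, z4] at hadj
        simp at hadj
      · have habs := abs_sub (u q) (u q')
        have hc3 : ((3:ℕ):ℝ) = 3 := by norm_num
        rw [hc3]
        linarith [habs, hMq, hMq', hM0]
    · have hadj' : |q'.1 - q.1| + |q'.2 - q.2| = 1 := by
        rw [abs_sub_comm q'.1 q.1, abs_sub_comm q'.2 q.2]; exact hadj
      have hε : (q'.1 - q.1) = 1 ∧ (q'.2 - q.2) = 0 ∨ (q'.1 - q.1) = -1 ∧ (q'.2 - q.2) = 0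
          ∨ (q'.1 - q.1) = 0 ∧ (q'.2 - q.2) = 1 ∨ (q'.1 - q.1) = 0 ∧ (q'.2 - q.2) = -1 := by
        rcases abs_cases (q'.1 - q.1) with ⟨ha, ha'⟩|⟨ha, ha'⟩ <;>
          rcases abs_cases (q'.2 - q.2) with ⟨hb, hb'⟩|⟨hb, hb'⟩ <;>
          rw [ha, hb] at hadj' <;> omega
      have key := dge_main N hN4 u hu q hqq.1 hqq.2 (q'.1 - q.1) (q'.2 - q.2) hε M hM hMpos
      have hq'eq : ((q.1 + (q'.1 - q.1), q.2 + (q'.2 - q.2)) : ℤ × ℤ) = q' := by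
        have c1 : q.1 + (q'.1 - q.1) = q'.1 := by ring
        have c2 : q.2 + (q'.2 - q.2) = q'.2 := by ring
        rw [c1, c2]
      rw [hq'eq] at key
      rw [abs_sub_comm (u q) (u q')]
      have hKN : 23*N ≤ 180*(N/3) := by omega
      have hKNr : (23:ℝ)*(N:ℝ) ≤ 180*((N/3:ℕ):ℝ) := by exact_mod_cast hKN
      have h1 : 0 ≤ |u q' - u q| := abs_nonneg _
      have h2 : 0 ≤ |u q' - u q| * (180*((N/3:ℕ):ℝ) - 23*(N:ℝ)) := mul_nonneg h1 (by linarith)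
      nlinarith [key, h2]
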